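/- The map M_{0,5} → (P^1)^5 sending a Möbius-equivalence class of an ordered quintuple of distinct points of P^1 to the 5-tuple of cross-ratios of the quadruples obtained by omitting each point in turn is injective. -/

import Mathlib

noncomputable section

open OnePoint

/-- Homogeneous coordinates for a point of `P¹ = ℂ ∪ {∞}`. -/
def toPair : OnePoint ℂ → ℂ × ℂ := fun z => Option.elim z (1, 0) (fun w => (w, 1))

/-- The `2×2` determinant of two pairs of homogeneous coordinates;
for finite points it is `p - q`. -/
def det2 (p q : ℂ × ℂ) : ℂ := p.1 * q.2 - q.1 * p.2

/-- The cross-ratio `(z₄-z₁)(z₂-z₃)/((z₄-z₃)(z₂-z₁))` of four points of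
`P¹ = ℂ ∪ {∞}`, computed homogeneously (so that the usual conventions for `∞`
hold); for four distinct points it is a finite complex number `≠ 0, 1`. -/
def crossRatio (z₁ z₂ z₃ z₄ : OnePoint ℂ) : ℂ :=
  det2 (toPair z₄) (toPair z₁) * det2 (toPair z₂) (toPair z₃) /
    (det2 (toPair z₄) (toPair z₃) * det2 (toPair z₂) (toPair z₁))

open scoped Classical in
/-- The Möbius transformation `z ↦ (az+b)/(cz+d)` on `P¹ = ℂ ∪ {∞}`. -/
noncomputable def moebius (a b c d : ℂ) (z : OnePoint ℂ) : OnePoint ℂ :=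
  if c * (toPair z).1 + d * (toPair z).2 = 0 then OnePoint.infty
  else (((a * (toPair z).1 + b * (toPair z).2) /
      (c * (toPair z).1 + d * (toPair z).2) : ℂ) : OnePoint ℂ)

lemma toPair_infty : toPair (∞ : OnePoint ℂ) = (1,0) := rfl
lemma toPair_coe (t : ℂ) : toPair (t : OnePoint ℂ) = (t, 1) := rfl
lemma toPair_ne_zero (z : OnePoint ℂ) : toPair z ≠ 0 := by
  cases z <;> simp [toPair_infty, toPair_coe, Prod.ext_iff]
lemma det2_eq_zero_iff (z w : OnePoint ℂ) : det2 (toPair z) (toPair w) = 0 ↔ z = w := by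
  cases z <;> cases w <;>
    simp [toPair_infty, toPair_coe, det2, sub_eq_zero, eq_comm]
lemma det2_ne_zero {z w : OnePoint ℂ} (h : z ≠ w) : det2 (toPair z) (toPair w) ≠ 0 :=
  fun h2 => h ((det2_eq_zero_iff z w).mp h2)
lemma pluecker (p q r s : ℂ × ℂ) :
    det2 p r * det2 q s - det2 p s * det2 q r = det2 p q * det2 r s := by
  simp only [det2]; ring

lemma moebius_key (a b c d : ℂ) (hdet : a * d - b * c ≠ 0) (z : OnePoint ℂ) :
    ∃ μ : ℂ, μ ≠ 0 ∧ toPair (moebius a b c d z) =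
      (μ * (a * (toPair z).1 + b * (toPair z).2),
       μ * (c * (toPair z).1 + d * (toPair z).2)) := by
  set x := (toPair z).1 with hx
  set y := (toPair z).2 with hy
  have hxy : ¬(x = 0 ∧ y = 0) := by
    rintro ⟨h1, h2⟩
    exact toPair_ne_zero z (Prod.ext h1 h2)
  unfold moebius
  rw [← hx, ← hy]
  split_ifs with h
  · have hnum : a * x + b * y ≠ 0 := by
      intro h2
      apply hxy
      constructor
      · have : (a * d - b * c) * x = d * (a * x + b * y) - b * (c * x + d * y) := by ring
        rw [h, h2, mul_zero, mul_zero, sub_zero] at this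
        exact (mul_eq_zero.mp this).resolve_left hdet
      · have : (a * d - b * c) * y = a * (c * x + d * y) - c * (a * x + b * y) := by ring
        rw [h, h2, mul_zero, mul_zero, sub_zero] at this
        exact (mul_eq_zero.mp this).resolve_left hdet
    refine ⟨(a * x + b * y)⁻¹, inv_ne_zero hnum, ?_⟩
    rw [toPair_infty, h, mul_zero, inv_mul_cancel₀ hnum]
  · refine ⟨(c * x + d * y)⁻¹, inv_ne_zero h, ?_⟩
    rw [toPair_coe, div_eq_inv_mul, inv_mul_cancel₀ h]

lemma det2_transform (a b c d μ ν : ℂ) (p q : ℂ × ℂ) :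
    det2 (μ * (a * p.1 + b * p.2), μ * (c * p.1 + d * p.2))
         (ν * (a * q.1 + b * q.2), ν * (c * q.1 + d * q.2)) =
      μ * ν * (a * d - b * c) * det2 p q := by
  simp only [det2]; ring

lemma crossRatio_moebius (a b c d : ℂ) (h : a * d - b * c ≠ 0) (z₁ z₂ z₃ z₄ : OnePoint ℂ) :
    crossRatio (moebius a b c d z₁) (moebius a b c d z₂) (moebius a b c d z₃)
      (moebius a b c d z₄) = crossRatio z₁ z₂ z₃ z₄ := by
  obtain ⟨μ₁, hμ₁, e₁⟩ := moebius_key a b c d h z₁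
  obtain ⟨μ₂, hμ₂, e₂⟩ := moebius_key a b c d h z₂
  obtain ⟨μ₃, hμ₃, e₃⟩ := moebius_key a b c d h z₃
  obtain ⟨μ₄, hμ₄, e₄⟩ := moebius_key a b c d h z₄
  unfold crossRatio
  rw [e₁, e₂, e₃, e₄, det2_transform, det2_transform, det2_transform, det2_transform]
  set A := det2 (toPair z₄) (toPair z₁)
  set B := det2 (toPair z₂) (toPair z₃)
  set C := det2 (toPair z₄) (toPair z₃)
  set D := det2 (toPair z₂) (toPair z₁)
  have hC : μ₁ * μ₂ * μ₃ * μ₄ * (a * d - b * c) ^ 2 ≠ 0 := by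
    apply mul_ne_zero (mul_ne_zero (mul_ne_zero (mul_ne_zero hμ₁ hμ₂) hμ₃) hμ₄)
    exact pow_ne_zero 2 h
  rw [show μ₄ * μ₁ * (a * d - b * c) * A * (μ₂ * μ₃ * (a * d - b * c) * B) =
      μ₁ * μ₂ * μ₃ * μ₄ * (a * d - b * c) ^ 2 * (A * B) by ring,
    show μ₄ * μ₃ * (a * d - b * c) * C * (μ₂ * μ₁ * (a * d - b * c) * D) =
      μ₁ * μ₂ * μ₃ * μ₄ * (a * d - b * c) ^ 2 * (C * D) by ring,
    mul_div_mul_left _ _ hC]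

open scoped Classical in
lemma moebius_eval (a b c d : ℂ) (z : OnePoint ℂ) (X Y μ : ℂ) (hμ : μ ≠ 0)
    (hp : toPair z = (μ * X, μ * Y)) :
    moebius a b c d z =
      if c * X + d * Y = 0 then OnePoint.infty
      else (((a * X + b * Y) / (c * X + d * Y) : ℂ) : OnePoint ℂ) := by
  unfold moebius
  rw [hp]
  simp only [show c * (μ * X) + d * (μ * Y) = μ * (c * X + d * Y) from by ring,
    show a * (μ * X) + b * (μ * Y) = μ * (a * X + b * Y) from by ring,
    mul_eq_zero, hμ, false_or, mul_div_mul_left _ _ hμ]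

lemma moebius_comp (a b c d a' b' c' d' : ℂ) (h' : a' * d' - b' * c' ≠ 0) (z : OnePoint ℂ) :
    moebius a b c d (moebius a' b' c' d' z) =
      moebius (a * a' + b * c') (a * b' + b * d') (c * a' + d * c') (c * b' + d * d') z := by
  obtain ⟨μ, hμ, hp⟩ := moebius_key a' b' c' d' h' z
  set x := (toPair z).1 with hx
  set y := (toPair z).2 with hy
  rw [moebius_eval a b c d _ (a' * x + b' * y) (c' * x + d' * y) μ hμ hp,
    moebius_eval (a * a' + b * c') (a * b' + b * d') (c * a' + d * c') (c * b' + d * d') z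
      x y 1 one_ne_zero (by rw [one_mul, one_mul]),
    show (c * a' + d * c') * x + (c * b' + d * d') * y =
      c * (a' * x + b' * y) + d * (c' * x + d' * y) from by ring,
    show (a * a' + b * c') * x + (a * b' + b * d') * y =
      a * (a' * x + b' * y) + b * (c' * x + d' * y) from by ring]

lemma moebius_id (δ : ℂ) (hδ : δ ≠ 0) (z : OnePoint ℂ) : moebius δ 0 0 δ z = z := by
  cases z with
  | infty =>
    rw [moebius_eval δ 0 0 δ ∞ 1 0 1 one_ne_zero (by rw [one_mul, one_mul]; rfl)]
    simp
  | coe t =>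
    rw [moebius_eval δ 0 0 δ t t 1 1 one_ne_zero (by rw [one_mul, one_mul]; rfl)]
    have h : (0 : ℂ) * t + δ * 1 = δ := by ring
    rw [h, if_neg hδ]
    congr 1
    field_simp
    ring

lemma moebius_inv (a b c d : ℂ) (h : a * d - b * c ≠ 0) (z : OnePoint ℂ) :
    moebius d (-b) (-c) a (moebius a b c d z) = z := by
  rw [moebius_comp d (-b) (-c) a a b c d h z,
    show d * a + -b * c = a * d - b * c from by ring,
    show d * b + -b * d = (0 : ℂ) from by ring,
    show -c * a + a * c = (0 : ℂ) from by ring,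
    show -c * b + a * d = a * d - b * c from by ring,
    moebius_id _ h]

lemma moebius_injective (a b c d : ℂ) (h : a * d - b * c ≠ 0)
    {z z' : OnePoint ℂ} (he : moebius a b c d z = moebius a b c d z') : z = z' := by
  rw [← moebius_inv a b c d h z, he, moebius_inv a b c d h z']

lemma std_map (p q r : OnePoint ℂ) (hpq : p ≠ q) (hpr : p ≠ r) (hqr : q ≠ r) :
    ∃ a b c d : ℂ, a * d - b * c ≠ 0 ∧ moebius a b c d p = ((0 : ℂ) : OnePoint ℂ) ∧
      moebius a b c d q = ((1 : ℂ) : OnePoint ℂ) ∧ moebius a b c d r = ∞ := by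
  set P := toPair p
  set Q := toPair q
  set R := toPair r
  have hQR : det2 Q R ≠ 0 := det2_ne_zero hqr
  have hQP : det2 Q P ≠ 0 := det2_ne_zero (Ne.symm hpq)
  have hPR : det2 P R ≠ 0 := det2_ne_zero hpr
  refine ⟨P.2 * det2 Q R, -P.1 * det2 Q R, R.2 * det2 Q P, -R.1 * det2 Q P, ?_, ?_, ?_, ?_⟩
  · rw [show P.2 * det2 Q R * (-R.1 * det2 Q P) - -P.1 * det2 Q R * (R.2 * det2 Q P) =
      det2 Q R * det2 Q P * det2 P R from by simp only [det2]; ring]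
    exact mul_ne_zero (mul_ne_zero hQR hQP) hPR
  · -- p ↦ 0
    rw [moebius_eval _ _ _ _ p P.1 P.2 1 one_ne_zero (by rw [one_mul, one_mul]),
      show R.2 * det2 Q P * P.1 + -R.1 * det2 Q P * P.2 = det2 Q P * det2 P R from by
        simp only [det2]; ring,
      show P.2 * det2 Q R * P.1 + -P.1 * det2 Q R * P.2 = (0 : ℂ) from by ring,
      if_neg (mul_ne_zero hQP hPR), zero_div]
  · -- q ↦ 1
    rw [moebius_eval _ _ _ _ q Q.1 Q.2 1 one_ne_zero (by rw [one_mul, one_mul]),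
      show R.2 * det2 Q P * Q.1 + -R.1 * det2 Q P * Q.2 = det2 Q P * det2 Q R from by
        simp only [det2]; ring,
      show P.2 * det2 Q R * Q.1 + -P.1 * det2 Q R * Q.2 = det2 Q P * det2 Q R from by
        simp only [det2]; ring,
      if_neg (mul_ne_zero hQP hQR), div_self (mul_ne_zero hQP hQR)]
  · -- r ↦ ∞
    rw [moebius_eval _ _ _ _ r R.1 R.2 1 one_ne_zero (by rw [one_mul, one_mul]),
      show R.2 * det2 Q P * R.1 + -R.1 * det2 Q P * R.2 = (0 : ℂ) from by ring,
      if_pos rfl]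

lemma three_transitive (p q r p' q' r' : OnePoint ℂ) (hpq : p ≠ q) (hpr : p ≠ r)
    (hqr : q ≠ r) (hpq' : p' ≠ q') (hpr' : p' ≠ r') (hqr' : q' ≠ r') :
    ∃ a b c d : ℂ, a * d - b * c ≠ 0 ∧ moebius a b c d p = p' ∧
      moebius a b c d q = q' ∧ moebius a b c d r = r' := by
  obtain ⟨a, b, c, d, hS, hS0, hS1, hSi⟩ := std_map p q r hpq hpr hqr
  obtain ⟨a', b', c', d', hT, hT0, hT1, hTi⟩ := std_map p' q' r' hpq' hpr' hqr'
  have hTadj : d' * a' - -b' * -c' ≠ 0 := by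
    rw [show d' * a' - -b' * -c' = a' * d' - b' * c' from by ring]; exact hT
  refine ⟨d' * a + -b' * c, d' * b + -b' * d, -c' * a + a' * c, -c' * b + a' * d, ?_, ?_, ?_, ?_⟩
  · rw [show (d' * a + -b' * c) * (-c' * b + a' * d) - (d' * b + -b' * d) * (-c' * a + a' * c) =
      (d' * a' - -b' * -c') * (a * d - b * c) from by ring]
    exact mul_ne_zero hTadj hS
  · rw [← moebius_comp d' (-b') (-c') a' a b c d hS p, hS0, ← hT0, moebius_inv _ _ _ _ hT]
  · rw [← moebius_comp d' (-b') (-c') a' a b c d hS q, hS1, ← hT1, moebius_inv _ _ _ _ hT]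
  · rw [← moebius_comp d' (-b') (-c') a' a b c d hS r, hSi, ← hTi, moebius_inv _ _ _ _ hT]

lemma crossRatio_inj₁ {u v a b c : OnePoint ℂ} (hab : a ≠ b) (hca : c ≠ a) (hcb : c ≠ b)
    (hau : a ≠ u) (hav : a ≠ v) (h : crossRatio u a b c = crossRatio v a b c) : u = v := by
  unfold crossRatio at h
  rw [div_eq_div_iff (mul_ne_zero (det2_ne_zero hcb) (det2_ne_zero hau))
    (mul_ne_zero (det2_ne_zero hcb) (det2_ne_zero hav))] at h
  have pl := pluecker (toPair c) (toPair a) (toPair u) (toPair v)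
  have key : det2 (toPair c) (toPair a) * det2 (toPair u) (toPair v) *
      (det2 (toPair a) (toPair b) * det2 (toPair c) (toPair b)) = 0 := by
    linear_combination (-(det2 (toPair a) (toPair b) * det2 (toPair c) (toPair b))) * pl + h
  have h2 : det2 (toPair c) (toPair a) * det2 (toPair u) (toPair v) = 0 :=
    (mul_eq_zero.mp key).resolve_right
      (mul_ne_zero (det2_ne_zero hab) (det2_ne_zero hcb))
  exact (det2_eq_zero_iff u v).mp ((mul_eq_zero.mp h2).resolve_left (det2_ne_zero hca))

lemma crossRatio_inj₄ {a b c u v : OnePoint ℂ} (hba : b ≠ a) (hbc : b ≠ c) (hac : a ≠ c)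
    (huc : u ≠ c) (hvc : v ≠ c) (h : crossRatio a b c u = crossRatio a b c v) : u = v := by
  unfold crossRatio at h
  rw [div_eq_div_iff (mul_ne_zero (det2_ne_zero huc) (det2_ne_zero hba))
    (mul_ne_zero (det2_ne_zero hvc) (det2_ne_zero hba))] at h
  have pl := pluecker (toPair u) (toPair v) (toPair a) (toPair c)
  have key : det2 (toPair u) (toPair v) * det2 (toPair a) (toPair c) *
      (det2 (toPair b) (toPair c) * det2 (toPair b) (toPair a)) = 0 := by
    linear_combination (-(det2 (toPair b) (toPair c) * det2 (toPair b) (toPair a))) * pl + h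
  have h2 : det2 (toPair u) (toPair v) * det2 (toPair a) (toPair c) = 0 :=
    (mul_eq_zero.mp key).resolve_right
      (mul_ne_zero (det2_ne_zero hbc) (det2_ne_zero hba))
  exact (det2_eq_zero_iff u v).mp ((mul_eq_zero.mp h2).resolve_right (det2_ne_zero hac))

/-- The map `M_{0,5} → (P¹)⁵` sending the class of an
ordered quintuple of distinct points of `P¹` to its five omitted-point
cross-ratios is injective: two quintuples with the same five cross-ratios are
related by a Möbius transformation. -/
theorem M05_crossRatio_map_injective (z w : Fin 5 → OnePoint ℂ)
    (hz : Function.Injective z) (hw : Function.Injective w)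
    (h1 : crossRatio (z 1) (z 2) (z 3) (z 4) = crossRatio (w 1) (w 2) (w 3) (w 4))
    (h2 : crossRatio (z 0) (z 2) (z 3) (z 4) = crossRatio (w 0) (w 2) (w 3) (w 4))
    (h3 : crossRatio (z 0) (z 1) (z 3) (z 4) = crossRatio (w 0) (w 1) (w 3) (w 4))
    (h4 : crossRatio (z 0) (z 1) (z 2) (z 4) = crossRatio (w 0) (w 1) (w 2) (w 4))
    (h5 : crossRatio (z 0) (z 1) (z 2) (z 3) = crossRatio (w 0) (w 1) (w 2) (w 3)) :
    ∃ a b c d : ℂ, a * d - b * c ≠ 0 ∧ ∀ k, moebius a b c d (z k) = w k := by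
  obtain ⟨a, b, c, d, hdet, hM1, hM2, hM3⟩ :=
    three_transitive (z 1) (z 2) (z 3) (w 1) (w 2) (w 3)
      (hz.ne (by decide)) (hz.ne (by decide)) (hz.ne (by decide))
      (hw.ne (by decide)) (hw.ne (by decide)) (hw.ne (by decide))
  have hM0 : moebius a b c d (z 0) = w 0 := by
    have inv5 := crossRatio_moebius a b c d hdet (z 0) (z 1) (z 2) (z 3)
    rw [hM1, hM2, hM3, h5] at inv5
    exact crossRatio_inj₁ (hw.ne (by decide)) (hw.ne (by decide)) (hw.ne (by decide))
      (fun he => hz.ne (show (1 : Fin 5) ≠ 0 by decide)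
        (moebius_injective a b c d hdet (hM1.trans he)))
      (hw.ne (by decide)) inv5
  have hM4 : moebius a b c d (z 4) = w 4 := by
    have inv1 := crossRatio_moebius a b c d hdet (z 1) (z 2) (z 3) (z 4)
    rw [hM1, hM2, hM3, h1] at inv1
    exact crossRatio_inj₄ (hw.ne (by decide)) (hw.ne (by decide)) (hw.ne (by decide))
      (fun he => hz.ne (show (4 : Fin 5) ≠ 3 by decide)
        (moebius_injective a b c d hdet (he.trans hM3.symm)))
      (hw.ne (by decide)) inv1
  refine ⟨a, b, c, d, hdet, ?_⟩
  intro k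
  fin_cases k
  exacts [hM0, hM1, hM2, hM3, hM4]
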